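/- The 3-dimensional polytope {(t5,t6,t8) ∈ ℝ³_{≥0} : t6 + t8 ≤ 1, t5 - t6 - t8 ≤ 0, 2t5 + t6 ≤ 1} has Lebesgue volume 11/72. -/
import Mathlib

open MeasureTheory

open Set in
/-- Inner integral over `z` for fixed `y ∈ [0,1]`. -/
lemma polyA2_inner_int (y : ℝ) (hy0 : 0 ≤ y) (hy1 : y ≤ 1) :
    (∫ z in (0:ℝ)..(1 - y), min (y + z) ((1 - y) / 2))
      = (1 - y) ^ 2 / 2 - max 0 (1 - 3 * y) ^ 2 / 8 := by
  rcases le_or_gt (1 / 3 : ℝ) y with h | h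
  · have hmax : max (0:ℝ) (1 - 3 * y) = 0 := max_eq_left (by linarith)
    rw [hmax,
      intervalIntegral.integral_congr (g := fun _ => (1 - y) / 2)
        (fun z hz => by
          rw [Set.uIcc_of_le (by linarith)] at hz
          exact min_eq_right (by have := hz.1; linarith)),
      intervalIntegral.integral_const]
    simp only [smul_eq_mul]
    ring
  · have hmax : max (0:ℝ) (1 - 3 * y) = 1 - 3 * y := max_eq_right (by linarith)
    set z0 : ℝ := (1 - 3 * y) / 2 with hz0
    have hz00 : (0:ℝ) ≤ z0 := by rw [hz0]; linarith
    have hz01 : z0 ≤ 1 - y := by rw [hz0]; linarith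
    have hcont : Continuous fun z : ℝ => min (y + z) ((1 - y) / 2) :=
      (continuous_const.add continuous_id).min continuous_const
    rw [← intervalIntegral.integral_add_adjacent_intervals
      (a := (0:ℝ)) (b := z0) (c := 1 - y)
      (hcont.intervalIntegrable _ _) (hcont.intervalIntegrable _ _)]
    have h1 : (∫ z in (0:ℝ)..z0, min (y + z) ((1 - y) / 2))
        = y * z0 + z0 ^ 2 / 2 := by
      rw [intervalIntegral.integral_congr (g := fun z => y + z)
        (fun z hz => by
          rw [Set.uIcc_of_le hz00] at hz
          exact min_eq_left (by have := hz.2; rw [hz0] at this; linarith)),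
        intervalIntegral.integral_add intervalIntegrable_const
          intervalIntegral.intervalIntegrable_id,
        intervalIntegral.integral_const, integral_id]
      simp only [smul_eq_mul]
      ring
    have h2 : (∫ z in z0..(1 - y), min (y + z) ((1 - y) / 2))
        = (1 - y - z0) * ((1 - y) / 2) := by
      rw [intervalIntegral.integral_congr (g := fun _ => (1 - y) / 2)
        (fun z hz => by
          rw [Set.uIcc_of_le hz01] at hz
          exact min_eq_right (by have := hz.1; rw [hz0] at this; linarith)),
        intervalIntegral.integral_const]
      simp only [smul_eq_mul]
    rw [h1, h2, hmax, hz0]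
    ring

lemma polyA2_outer_int :
    (∫ y in (0:ℝ)..1, ((1 - y) ^ 2 / 2 - max 0 (1 - 3 * y) ^ 2 / 8)) = 11 / 72 := by
  have hc1 : Continuous fun y : ℝ => (1 - y) ^ 2 / 2 := by fun_prop
  have hc2 : Continuous fun y : ℝ => max 0 (1 - 3 * y) ^ 2 / 8 := by fun_prop
  rw [intervalIntegral.integral_sub (hc1.intervalIntegrable _ _) (hc2.intervalIntegrable _ _)]
  have e1 : (∫ y in (0:ℝ)..1, (1 - y) ^ 2 / 2) = 1 / 6 := by
    rw [intervalIntegral.integral_div]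
    have h := intervalIntegral.integral_comp_sub_left (a := (0:ℝ)) (b := 1) (fun u : ℝ => u ^ 2) 1
    norm_num at h
    rw [h]
    norm_num
  have e2 : (∫ y in (0:ℝ)..1, max 0 (1 - 3 * y) ^ 2 / 8) = 1 / 72 := by
    rw [← intervalIntegral.integral_add_adjacent_intervals
      (a := (0:ℝ)) (b := 1/3) (c := 1)
      (hc2.intervalIntegrable _ _) (hc2.intervalIntegrable _ _)]
    have p1 : (∫ y in (0:ℝ)..(1/3), max 0 (1 - 3 * y) ^ 2 / 8)
        = ∫ y in (0:ℝ)..(1/3), (fun u : ℝ => u ^ 2 / 8) (1 - 3 * y) := by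
      refine intervalIntegral.integral_congr fun y hy => ?_
      rw [Set.uIcc_of_le (by norm_num)] at hy
      have hm : max (0:ℝ) (1 - 3 * y) = 1 - 3 * y :=
        max_eq_right (by have := hy.2; linarith)
      simp [hm]
    have p2 : (∫ y in ((1:ℝ)/3)..1, max 0 (1 - 3 * y) ^ 2 / 8) = 0 := by
      rw [intervalIntegral.integral_congr (g := fun _ => (0:ℝ))
        (fun y hy => by
          rw [Set.uIcc_of_le (by norm_num)] at hy
          have hm : max (0:ℝ) (1 - 3 * y) = 0 :=
            max_eq_left (by have := hy.1; linarith)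
          simp [hm])]
      simp
    rw [p1, p2,
      intervalIntegral.integral_comp_sub_mul (fun u : ℝ => u ^ 2 / 8) (by norm_num : (3:ℝ) ≠ 0) 1]
    norm_num [intervalIntegral.integral_div]
  rw [e1, e2]; norm_num

open Set in
theorem polytope_volume_A2 :
    volume {t : ℝ × ℝ × ℝ |
      0 ≤ t.1 ∧ 0 ≤ t.2.1 ∧ 0 ≤ t.2.2 ∧
      t.2.1 + t.2.2 ≤ 1 ∧
      t.1 - t.2.1 - t.2.2 ≤ 0 ∧
      2 * t.1 + t.2.1 ≤ 1} = 11 / 72 := by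
  set S : Set (ℝ × ℝ × ℝ) := {t : ℝ × ℝ × ℝ |
      0 ≤ t.1 ∧ 0 ≤ t.2.1 ∧ 0 ≤ t.2.2 ∧
      t.2.1 + t.2.2 ≤ 1 ∧
      t.1 - t.2.1 - t.2.2 ≤ 0 ∧
      2 * t.1 + t.2.1 ≤ 1} with hSdef
  set T : Set (ℝ × ℝ) := {p : ℝ × ℝ | 0 ≤ p.1 ∧ 0 ≤ p.2 ∧ p.1 + p.2 ≤ 1} with hTdef
  set F : ℝ × ℝ → ℝ := fun p => min (p.1 + p.2) ((1 - p.1) / 2) with hFdef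
  have hSm : MeasurableSet S := by
    apply IsClosed.measurableSet
    have hrw : S = {t : ℝ × ℝ × ℝ | 0 ≤ t.1} ∩ {t | 0 ≤ t.2.1} ∩ {t | 0 ≤ t.2.2} ∩
        {t | t.2.1 + t.2.2 ≤ 1} ∩ {t | t.1 - t.2.1 - t.2.2 ≤ 0} ∩
        {t | 2 * t.1 + t.2.1 ≤ 1} := by
      ext t; simp only [hSdef, mem_setOf_eq, mem_inter_iff]; tauto
    rw [hrw]
    exact ((((((isClosed_le (by fun_prop) (by fun_prop)).inter
      (isClosed_le (by fun_prop) (by fun_prop))).inter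
      (isClosed_le (by fun_prop) (by fun_prop))).inter
      (isClosed_le (by fun_prop) (by fun_prop))).inter
      (isClosed_le (by fun_prop) (by fun_prop))).inter
      (isClosed_le (by fun_prop) (by fun_prop)))
  have hTclosed : IsClosed T := by
    have hrw : T = {p : ℝ × ℝ | 0 ≤ p.1} ∩ {p | 0 ≤ p.2} ∩ {p | p.1 + p.2 ≤ 1} := by
      ext p; simp only [hTdef, mem_setOf_eq, mem_inter_iff]; tauto
    rw [hrw]
    exact ((isClosed_le (by fun_prop) (by fun_prop)).inter
      (isClosed_le (by fun_prop) (by fun_prop))).inter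
      (isClosed_le (by fun_prop) (by fun_prop))
  have hTm : MeasurableSet T := hTclosed.measurableSet
  have hTc : IsCompact T := by
    refine IsCompact.of_isClosed_subset
      (isCompact_Icc (a := ((0:ℝ),(0:ℝ))) (b := ((1:ℝ),(1:ℝ)))) hTclosed ?_
    rintro ⟨y, z⟩ ⟨h1, h2, h3⟩
    simp only [mem_Icc, Prod.le_def]
    dsimp only at h1 h2 h3
    exact ⟨⟨h1, h2⟩, ⟨by linarith, by linarith⟩⟩
  have hFc : Continuous F := by
    apply Continuous.min <;> fun_prop
  have hInt : IntegrableOn F T := hFc.continuousOn.integrableOn_compact hTc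
  -- Step 1: volume S as a lintegral over T
  have step1 : volume S = ∫⁻ p in T, ENNReal.ofReal (F p) := by
    rw [show (volume : Measure (ℝ × (ℝ × ℝ))) = (volume : Measure ℝ).prod volume from rfl,
      Measure.prod_apply_symm hSm]
    have key : ∀ p : ℝ × ℝ, volume ((fun x => (x, p)) ⁻¹' S)
        = T.indicator (fun p => ENNReal.ofReal (F p)) p := by
      intro p
      by_cases hp : p ∈ T
      · obtain ⟨hp1, hp2, hp3⟩ := id hp
        have hpre : (fun x => (x, p)) ⁻¹' S = Icc 0 (F p) := by
          ext x
          simp only [hSdef, hFdef, mem_preimage, mem_setOf_eq, mem_Icc, le_min_iff]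
          constructor
          · rintro ⟨h1, _, _, _, h5, h6⟩
            exact ⟨h1, by linarith, by linarith⟩
          · rintro ⟨h1, h2, h3⟩
            exact ⟨h1, hp1, hp2, hp3, by linarith, by linarith⟩
        rw [hpre, Real.volume_Icc, indicator_of_mem hp, sub_zero]
      · have hpre : (fun x => (x, p)) ⁻¹' S = ∅ := by
          ext x
          simp only [hSdef, mem_preimage, mem_setOf_eq, mem_empty_iff_false, iff_false, not_and]
          intro _ h2 h3 h4 _
          exact absurd ⟨h2, h3, h4⟩ hp
        rw [hpre, measure_empty, indicator_of_notMem hp]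
    rw [lintegral_congr key, lintegral_indicator hTm]
  -- Step 2: pass to a Bochner integral
  have hnn : 0 ≤ᵐ[volume.restrict T] F := by
    refine (ae_restrict_iff' hTm).2 (Filter.Eventually.of_forall fun p hp => ?_)
    obtain ⟨hp1, hp2, hp3⟩ := hp
    simp only [Pi.zero_apply]
    exact le_min (add_nonneg hp1 hp2) (by linarith)
  have step2 : volume S = ENNReal.ofReal (∫ p in T, F p) := by
    rw [step1, ofReal_integral_eq_lintegral_ofReal hInt hnn]
  -- Step 3: compute the planar integral by Fubini
  have step3 : (∫ p in T, F p) = 11 / 72 := by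
    rw [← integral_indicator hTm]
    have hIndInt : Integrable (T.indicator F) ((volume : Measure ℝ).prod volume) :=
      (integrable_indicator_iff hTm).2 hInt
    rw [show (volume : Measure (ℝ × ℝ)) = (volume : Measure ℝ).prod volume from rfl,
      integral_prod _ hIndInt]
    have inner_eq : ∀ y : ℝ, (∫ z, T.indicator F (y, z))
        = (Icc (0:ℝ) 1).indicator
            (fun y => (1 - y) ^ 2 / 2 - max 0 (1 - 3 * y) ^ 2 / 8) y := by
      intro y
      by_cases hy : y ∈ Icc (0:ℝ) 1
      · obtain ⟨hy0, hy1⟩ := hy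
        have hfun : (fun z => T.indicator F (y, z))
            = (Icc (0:ℝ) (1 - y)).indicator (fun z => F (y, z)) := by
          funext z
          by_cases hz : z ∈ Icc (0:ℝ) (1 - y)
          · rw [indicator_of_mem hz, indicator_of_mem]
            exact ⟨hy0, hz.1, by have := hz.2; dsimp only; linarith⟩
          · rw [indicator_of_notMem hz, indicator_of_notMem]
            rintro ⟨_, h2, h3⟩
            dsimp only at h2 h3
            exact hz ⟨h2, by linarith⟩
        rw [hfun, integral_indicator measurableSet_Icc, integral_Icc_eq_integral_Ioc,
          ← intervalIntegral.integral_of_le (by linarith),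
          indicator_of_mem (Set.mem_Icc.mpr ⟨hy0, hy1⟩)]
        exact polyA2_inner_int y hy0 hy1
      · have hfun : (fun z => T.indicator F (y, z)) = fun _ => (0:ℝ) := by
          funext z
          refine indicator_of_notMem ?_ _
          rintro ⟨h1, h2, h3⟩
          dsimp only at h1 h2 h3
          exact hy ⟨h1, by linarith⟩
        rw [hfun, indicator_of_notMem hy, integral_zero]
    rw [integral_congr_ae (Filter.Eventually.of_forall inner_eq),
      integral_indicator measurableSet_Icc, integral_Icc_eq_integral_Ioc,
      ← intervalIntegral.integral_of_le (by norm_num : (0:ℝ) ≤ 1)]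
    exact polyA2_outer_int
  rw [step2, step3, ENNReal.ofReal_div_of_pos (by norm_num)]
  norm_num
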